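/- Every function f : (0,∞) → (0,∞) satisfying: f is operator monotone, f(t) = t·f(1/t) for all t > 0, and f(1) = 1, obeys the pointwise bounds 2t/(t+1) ≤ f(t) ≤ (t+1)/2 for all t > 0. -/

import Mathlib

open Matrix ComplexOrder

/-- The matrix obtained by applying `f : ℝ → ℝ` to a Hermitian matrix via the
spectral theorem (functional calculus). -/
noncomputable def herFun {n : ℕ} (f : ℝ → ℝ) {A : Matrix (Fin n) (Fin n) ℂ}
    (hA : A.IsHermitian) : Matrix (Fin n) (Fin n) ℂ :=
  (hA.eigenvectorUnitary : Matrix (Fin n) (Fin n) ℂ) *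
    Matrix.diagonal (Complex.ofReal ∘ f ∘ hA.eigenvalues) *
    star (hA.eigenvectorUnitary : Matrix (Fin n) (Fin n) ℂ)

/-- `f` is operator monotone on `(0, ∞)`: for all matrix sizes `n` and positive
definite `A ≤ B` one has `f(A) ≤ f(B)` in the Loewner order. -/
def OperatorMonotone (f : ℝ → ℝ) : Prop :=
  ∀ (n : ℕ) (A B : Matrix (Fin n) (Fin n) ℂ) (hA : A.PosDef) (hB : B.PosDef),
    (B - A).PosSemidef → (herFun f hB.1 - herFun f hA.1).PosSemidef
/-- Conjugation by a unitary matrix as an `ℝ`-algebra homomorphism. -/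
noncomputable def conjAH {n : ℕ} (V : Matrix (Fin n) (Fin n) ℂ)
    (hV : V ∈ Matrix.unitaryGroup (Fin n) ℂ) :
    Matrix (Fin n) (Fin n) ℂ →ₐ[ℝ] Matrix (Fin n) (Fin n) ℂ where
  toFun M := V * M * star V
  map_one' := by
    show V * 1 * star V = 1
    rw [mul_one]
    exact Matrix.mem_unitaryGroup_iff.mp hV
  map_mul' M N := by
    have h : star V * V = 1 := Matrix.mem_unitaryGroup_iff'.mp hV
    calc V * (M * N) * star V = V * M * (star V * V) * N * star V := by
          rw [h]; noncomm_ring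
      _ = V * M * star V * (V * N * star V) := by noncomm_ring
  map_zero' := by simp
  map_add' M N := by noncomm_ring
  commutes' r := by
    have h1 : V * star V = 1 := Matrix.mem_unitaryGroup_iff.mp hV
    simp only [Algebra.algebraMap_eq_smul_one]
    rw [mul_smul_comm, mul_one, smul_mul_assoc, h1]

lemma herFun_conj {n : ℕ} (f : ℝ → ℝ) {V : Matrix (Fin n) (Fin n) ℂ}
    (hV : V ∈ Matrix.unitaryGroup (Fin n) ℂ) (d : Fin n → ℝ)
    {A : Matrix (Fin n) (Fin n) ℂ} (hA : A.IsHermitian)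
    (hAeq : A = V * Matrix.diagonal (Complex.ofReal ∘ d) * star V) :
    herFun f hA = V * Matrix.diagonal (Complex.ofReal ∘ f ∘ d) * star V := by
  classical
  set S : Finset ℝ := (Finset.univ.image hA.eigenvalues) ∪ (Finset.univ.image d) with hS
  set p : Polynomial ℝ := Lagrange.interpolate S id f with hp
  have hpeval : ∀ x ∈ S, p.eval x = f x := by
    intro x hx
    rw [hp]
    simpa using Lagrange.eval_interpolate_at_node (v := id) (r := f) (Set.injOn_id _) hx
  have main : ∀ (W : Matrix (Fin n) (Fin n) ℂ) (hW : W ∈ Matrix.unitaryGroup (Fin n) ℂ)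
      (c : Fin n → ℝ),
      Polynomial.aeval (W * Matrix.diagonal (Complex.ofReal ∘ c) * star W) p =
        W * Matrix.diagonal (Complex.ofReal ∘ (fun i => p.eval (c i))) * star W := by
    intro W hW c
    have h1 : W * Matrix.diagonal (Complex.ofReal ∘ c) * star W =
        conjAH W hW (Matrix.diagonal (Complex.ofReal ∘ c)) := rfl
    rw [h1, Polynomial.aeval_algHom_apply]
    have h2 : Matrix.diagonal (Complex.ofReal ∘ c) =
        Matrix.diagonalAlgHom (n := Fin n) (α := ℂ) ℝ (Complex.ofReal ∘ c) := rfl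
    rw [h2, Polynomial.aeval_algHom_apply]
    have h3 : Polynomial.aeval (Complex.ofReal ∘ c) p =
        Complex.ofReal ∘ (fun i => p.eval (c i)) := by
      funext i
      have h5 := Polynomial.aeval_algHom_apply (Pi.evalAlgHom ℝ (fun _ : Fin n => ℂ) i)
        (Complex.ofReal ∘ c) p
      have h4 : (Polynomial.aeval (Complex.ofReal ∘ c) p) i
          = Polynomial.aeval ((algebraMap ℝ ℂ) (c i)) p := h5.symm
      show (Polynomial.aeval (Complex.ofReal ∘ c) p) i = Complex.ofReal (p.eval (c i))
      rw [h4, Polynomial.aeval_algebraMap_apply_eq_algebraMap_eval]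
      rfl
    rw [h3]
    rfl
  have hspec : A = (hA.eigenvectorUnitary : Matrix (Fin n) (Fin n) ℂ) *
      Matrix.diagonal (Complex.ofReal ∘ hA.eigenvalues) *
      star (hA.eigenvectorUnitary : Matrix (Fin n) (Fin n) ℂ) := hA.spectral_theorem
  have hUmem := (hA.eigenvectorUnitary).2
  have hfun1 : (Complex.ofReal ∘ fun i => p.eval (hA.eigenvalues i))
      = (Complex.ofReal ∘ f ∘ hA.eigenvalues) := by
    funext i
    show Complex.ofReal (p.eval (hA.eigenvalues i)) = Complex.ofReal (f (hA.eigenvalues i))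
    rw [hpeval _ (by simp [hS])]
  have hfun2 : (Complex.ofReal ∘ fun i => p.eval (d i)) = (Complex.ofReal ∘ f ∘ d) := by
    funext i
    show Complex.ofReal (p.eval (d i)) = Complex.ofReal (f (d i))
    rw [hpeval _ (by simp [hS])]
  have e1 : herFun f hA = Polynomial.aeval A p := by
    conv_rhs => rw [hspec]
    rw [main _ hUmem _, hfun1]
    rfl
  have e2 : Polynomial.aeval A p =
      V * Matrix.diagonal (Complex.ofReal ∘ f ∘ d) * star V := by
    conv_lhs => rw [hAeq]
    rw [main _ hV _, hfun2]
  rw [e1, e2]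


lemma posDef_conj {n : ℕ} {V D : Matrix (Fin n) (Fin n) ℂ}
    (hV : V ∈ Matrix.unitaryGroup (Fin n) ℂ) (hD : D.PosDef) :
    (V * D * star V).PosDef := by
  have h1 : V * star V = 1 := Matrix.mem_unitaryGroup_iff.mp hV
  have h2 : star V * V = 1 := Matrix.mem_unitaryGroup_iff'.mp hV
  rw [posDef_iff_dotProduct_mulVec]
  constructor
  · have := hD.1
    unfold Matrix.IsHermitian at *
    rw [star_eq_conjTranspose] at *
    rw [conjTranspose_mul, conjTranspose_mul, conjTranspose_conjTranspose, this,
      Matrix.mul_assoc]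
  · intro x hx
    have hx' : star V *ᵥ x ≠ 0 := by
      intro h
      apply hx
      have := congrArg (fun y => V *ᵥ y) h
      simpa [Matrix.mulVec_mulVec, h1] using this
    have := hD.dotProduct_mulVec_pos hx'
    simpa [Matrix.star_mulVec, Matrix.dotProduct_mulVec, Matrix.mulVec_mulVec,
      Matrix.vecMul_vecMul, star_eq_conjTranspose, Matrix.mul_assoc] using this

lemma inv_conj {n : ℕ} {V : Matrix (Fin n) (Fin n) ℂ}
    (hV : V ∈ Matrix.unitaryGroup (Fin n) ℂ) (c : Fin n → ℂ) (hc : ∀ i, c i ≠ 0) :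
    (V * Matrix.diagonal c * star V)⁻¹ = V * Matrix.diagonal (fun i => (c i)⁻¹) * star V := by
  have h1 : V * star V = 1 := Matrix.mem_unitaryGroup_iff.mp hV
  have h2 : star V * V = 1 := Matrix.mem_unitaryGroup_iff'.mp hV
  apply Matrix.inv_eq_right_inv
  calc V * Matrix.diagonal c * star V * (V * Matrix.diagonal (fun i => (c i)⁻¹) * star V)
      = V * (Matrix.diagonal c * (star V * V) * Matrix.diagonal (fun i => (c i)⁻¹)) * star V := by
        noncomm_ring
    _ = 1 := by
        rw [h2, mul_one, Matrix.diagonal_mul_diagonal]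
        have : (fun i => c i * (c i)⁻¹) = fun _ => (1 : ℂ) := by
          funext i; exact mul_inv_cancel₀ (hc i)
        rw [this, Matrix.diagonal_one, mul_one, h1]

lemma psd_diag_entry {n : ℕ} {M : Matrix (Fin n) (Fin n) ℂ} (hM : M.PosSemidef) (i : Fin n) :
    0 ≤ M i i := by
  have := hM.dotProduct_mulVec_nonneg (Pi.single i 1)
  simpa [dotProduct, Matrix.mulVec, Pi.single_apply, Finset.sum_ite_eq,
    dotProduct_single] using this

lemma real_entry_nonneg {x : ℝ} (h : (0 : ℂ) ≤ (x : ℂ)) : 0 ≤ x := by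
  rwa [Complex.zero_le_real] at h

lemma psd2 {a b c : ℝ} (ha : 0 ≤ a) (hc : 0 ≤ c) (hb : b ^ 2 ≤ a * c) :
    (!![(a : ℂ), (b : ℂ); (b : ℂ), (c : ℂ)]).PosSemidef := by
  rw [posSemidef_iff_dotProduct_mulVec]
  constructor
  · unfold Matrix.IsHermitian
    ext i j
    fin_cases i <;> fin_cases j <;> simp [Matrix.conjTranspose_apply]
  · intro x
    have e : dotProduct (star x)
        ((!![(a : ℂ), (b : ℂ); (b : ℂ), (c : ℂ)]) *ᵥ x)
        = starRingEnd ℂ (x 0) * ((a : ℂ) * x 0 + (b : ℂ) * x 1)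
          + starRingEnd ℂ (x 1) * ((b : ℂ) * x 0 + (c : ℂ) * x 1) := by
      simp [dotProduct, Matrix.mulVec, Fin.sum_univ_two]
    rw [e]
    set p := (x 0).re; set q := (x 0).im; set r := (x 1).re; set s := (x 1).im
    rw [Complex.le_def]
    constructor
    · simp only [Complex.add_re, Complex.mul_re, Complex.mul_im, Complex.conj_re,
        Complex.conj_im, Complex.add_im, Complex.ofReal_re, Complex.ofReal_im, Complex.zero_re]
      rcases eq_or_lt_of_le hc with hc0 | hc0
      · have hb0 : b = 0 := by nlinarith [sq_nonneg b]
        simp only [hb0]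
        nlinarith [sq_nonneg p, sq_nonneg q, sq_nonneg r, sq_nonneg s]
      · nlinarith [sq_nonneg (b * p + c * r), sq_nonneg (b * q + c * s),
          mul_pos hc0 hc0, sq_nonneg p, sq_nonneg q]
    · simp only [Complex.add_im, Complex.mul_re, Complex.mul_im, Complex.conj_re,
        Complex.conj_im, Complex.add_re, Complex.ofReal_re, Complex.ofReal_im, Complex.zero_im]
      ring

lemma one_mem_unitary (n : ℕ) : (1 : Matrix (Fin n) (Fin n) ℂ) ∈ Matrix.unitaryGroup (Fin n) ℂ := by
  rw [Matrix.mem_unitaryGroup_iff]; simp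

lemma herFun_diag {n : ℕ} (f : ℝ → ℝ) (d : Fin n → ℝ)
    (hA : (Matrix.diagonal (Complex.ofReal ∘ d)).IsHermitian) :
    herFun f hA = Matrix.diagonal (Complex.ofReal ∘ f ∘ d) := by
  have := herFun_conj f (one_mem_unitary n) d hA (by simp)
  simpa using this

noncomputable def wC : ℂ := ((Real.sqrt 2)⁻¹ : ℝ)

noncomputable def Wmat : Matrix (Fin 2) (Fin 2) ℂ := !![wC, wC; wC, -wC]

lemma wC_conj : starRingEnd ℂ wC = wC := Complex.conj_ofReal _

lemma wC_sq : wC * wC = 1 / 2 := by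
  have h : ((Real.sqrt 2)⁻¹ * (Real.sqrt 2)⁻¹ : ℝ) = 1 / 2 := by
    rw [← mul_inv, Real.mul_self_sqrt (by norm_num : (0:ℝ) ≤ 2)]
    norm_num
  unfold wC
  rw [← Complex.ofReal_mul, h]
  norm_num

lemma Wmem : Wmat ∈ Matrix.unitaryGroup (Fin 2) ℂ := by
  rw [Matrix.mem_unitaryGroup_iff]
  ext i j
  fin_cases i <;> fin_cases j <;>
    simp [Wmat, Matrix.mul_apply, Fin.sum_univ_two, Matrix.star_apply,
      Complex.star_def, wC_conj, Matrix.one_apply] <;>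
    linear_combination 2 * wC_sq

lemma conjW (a b : ℝ) :
    Wmat * Matrix.diagonal (Complex.ofReal ∘ ![a, b]) * star Wmat =
      !![(((a + b) / 2 : ℝ) : ℂ), (((a - b) / 2 : ℝ) : ℂ);
         (((a - b) / 2 : ℝ) : ℂ), (((a + b) / 2 : ℝ) : ℂ)] := by
  ext i j
  fin_cases i <;> fin_cases j <;>
    simp [Wmat, Matrix.mul_apply, Matrix.diagonal_apply, Fin.sum_univ_two,
      Matrix.star_apply, Complex.star_def, wC_conj, Matrix.vecMul_diagonal] <;>
    push_cast <;>
    first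
      | linear_combination ((a : ℂ) + b) * wC_sq
      | linear_combination ((a : ℂ) - b) * wC_sq

lemma diag2 (u y : ℝ) :
    Matrix.diagonal (Complex.ofReal ∘ ![u, y]) = !![(u : ℂ), 0; 0, (y : ℂ)] := by
  ext i j
  fin_cases i <;> fin_cases j <;> simp [Matrix.diagonal_apply]

/-- Scalar monotonicity from operator monotonicity (`n = 1`). -/
lemma opmono_scalar_mono {f : ℝ → ℝ} (hmono : OperatorMonotone f)
    {a b : ℝ} (ha : 0 < a) (hab : a ≤ b) : f a ≤ f b := by
  set dA : Fin 1 → ℝ := fun _ => a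
  set dB : Fin 1 → ℝ := fun _ => b
  have hApos : (Matrix.diagonal (Complex.ofReal ∘ dA)).PosDef :=
    Matrix.PosDef.diagonal fun i => Complex.zero_lt_real.mpr ha
  have hBpos : (Matrix.diagonal (Complex.ofReal ∘ dB)).PosDef :=
    Matrix.PosDef.diagonal fun i => Complex.zero_lt_real.mpr (lt_of_lt_of_le ha hab)
  have hBA : (Matrix.diagonal (Complex.ofReal ∘ dB) -
      Matrix.diagonal (Complex.ofReal ∘ dA)).PosSemidef := by
    rw [Matrix.diagonal_sub]
    refine Matrix.PosSemidef.diagonal fun i => ?_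
    show (0 : ℂ) ≤ ((b : ℝ) : ℂ) - ((a : ℝ) : ℂ)
    rw [← Complex.ofReal_sub, Complex.zero_le_real]
    linarith
  have hcon := hmono 1 _ _ hApos hBpos hBA
  rw [herFun_diag f dA hApos.1, herFun_diag f dB hBpos.1] at hcon
  have h0 := psd_diag_entry hcon 0
  simp only [Matrix.sub_apply, Matrix.diagonal_apply_eq, Function.comp_apply] at h0
  rw [← Complex.ofReal_sub, Complex.zero_le_real] at h0
  linarith

/-- The 2×2 consequence: `f u ≥ (f s + f r)/2` whenever `u > (s+r)/2`. -/
lemma opmono_L2 {f : ℝ → ℝ} (hmono : OperatorMonotone f)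
    {s r u : ℝ} (hs : 0 < s) (hr : 0 < r) (hu : (s + r) / 2 < u) :
    (f s + f r) / 2 ≤ f u := by
  have hmpos : 0 < (s + r) / 2 := by linarith
  have halpos : 0 < u - (s + r) / 2 := by linarith
  have hupos : 0 < u := by linarith
  set y : ℝ := (s + r) / 2 + ((s - r) / 2) ^ 2 / (u - (s + r) / 2) with hy
  have hypos : 0 < y := by
    have h1 : 0 ≤ ((s - r) / 2) ^ 2 / (u - (s + r) / 2) := by positivity
    rw [hy]; linarith
  set A : Matrix (Fin 2) (Fin 2) ℂ :=
    Wmat * Matrix.diagonal (Complex.ofReal ∘ ![s, r]) * star Wmat with hA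
  set B : Matrix (Fin 2) (Fin 2) ℂ := Matrix.diagonal (Complex.ofReal ∘ ![u, y]) with hB
  have hApos : A.PosDef := by
    apply posDef_conj Wmem
    apply Matrix.PosDef.diagonal
    intro i
    fin_cases i <;> simp [Complex.zero_lt_real] <;> assumption
  have hBpos : B.PosDef := by
    apply Matrix.PosDef.diagonal
    intro i
    fin_cases i <;> simp [Complex.zero_lt_real] <;> assumption
  have hBA : (B - A).PosSemidef := by
    have hBA' : B - A = !![((u - (s + r) / 2 : ℝ) : ℂ), ((-((s - r) / 2) : ℝ) : ℂ);
        ((-((s - r) / 2) : ℝ) : ℂ), ((((s - r) / 2) ^ 2 / (u - (s + r) / 2) : ℝ) : ℂ)] := by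
      rw [hB, hA, conjW s r, diag2 u y]
      ext i j
      fin_cases i <;> fin_cases j <;>
        simp [Matrix.sub_apply, hy] <;> push_cast <;> ring
    rw [hBA']
    refine psd2 (le_of_lt halpos) (by positivity) ?_
    rw [mul_div_cancel₀ _ (ne_of_gt halpos)]
    simp
  have hcon := hmono 2 A B hApos hBpos hBA
  have hfA : herFun f hApos.1 = !![(((f s + f r) / 2 : ℝ) : ℂ), (((f s - f r) / 2 : ℝ) : ℂ);
      (((f s - f r) / 2 : ℝ) : ℂ), (((f s + f r) / 2 : ℝ) : ℂ)] := by
    have hcomp : (Complex.ofReal ∘ f ∘ ![s, r]) = (Complex.ofReal ∘ ![f s, f r]) := by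
      funext i; fin_cases i <;> simp
    rw [herFun_conj f Wmem ![s, r] hApos.1 hA, hcomp, conjW (f s) (f r)]
  have hfB : herFun f hBpos.1 = Matrix.diagonal (Complex.ofReal ∘ f ∘ ![u, y]) :=
    herFun_diag f ![u, y] hBpos.1
  rw [hfA, hfB] at hcon
  have h0 := psd_diag_entry hcon 0
  simp only [Matrix.sub_apply, Matrix.diagonal_apply_eq, Function.comp_apply,
    Matrix.cons_val', Matrix.cons_val_zero, Matrix.empty_val', Matrix.cons_val_fin_one,
    Matrix.of_apply] at h0
  rw [← Complex.ofReal_sub, Complex.zero_le_real] at h0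
  linarith


noncomputable def MfFun : ℝ → ℝ := fun x => (x + x⁻¹) / 2

lemma MfFun_one_le {x : ℝ} (hx : 0 < x) : 1 ≤ MfFun x := by
  have key : MfFun x - 1 = (x - 1) ^ 2 / (2 * x) := by
    unfold MfFun; field_simp; ring
  have h2 : 0 ≤ (x - 1) ^ 2 / (2 * x) := by positivity
  linarith

lemma MfFun_half {x : ℝ} (hx : 1 ≤ x) : MfFun x - 1 ≤ (x - 1) / 2 := by
  have hx0 : 0 < x := lt_of_lt_of_le one_pos hx
  have key : (x - 1) / 2 - (MfFun x - 1) = (x - 1) / (2 * x) := by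
    unfold MfFun; field_simp; ring
  have h2 : 0 ≤ (x - 1) / (2 * x) := div_nonneg (by linarith) (by positivity)
  linarith

lemma MfFun_ident {t : ℝ} (ht : 0 < t) : (t + 1) ^ 2 = 2 * t * (MfFun t + 1) := by
  unfold MfFun; field_simp; ring

lemma scalar_upper {f : ℝ → ℝ} (hfpos : ∀ t : ℝ, 0 < t → 0 < f t)
    (hmono : ∀ a b : ℝ, 0 < a → a ≤ b → f a ≤ f b)
    (hL2 : ∀ s r u : ℝ, 0 < s → 0 < r → (s + r) / 2 < u → (f s + f r) / 2 ≤ f u)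
    (hsym : ∀ t : ℝ, 0 < t → f t = t * f t⁻¹) (hone : f 1 = 1) :
    ∀ t : ℝ, 0 < t → f t ≤ (t + 1) / 2 := by
  have ratio : ∀ x y : ℝ, 0 < x → x ≤ y → f y * x ≤ f x * y := by
    intro x y hx hxy
    have hy : 0 < y := lt_of_lt_of_le hx hxy
    have h3 : f y⁻¹ ≤ f x⁻¹ :=
      hmono _ _ (inv_pos.mpr hy) (by exact inv_anti₀ hx hxy)
    rw [hsym y hy, hsym x hx]
    have h4 := mul_le_mul_of_nonneg_left h3 (le_of_lt (mul_pos hx hy))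
    nlinarith [h4]
  have star : ∀ t : ℝ, 0 < t → f t * (t + 1) ≤ f (MfFun t) * (2 * t) := by
    intro t ht
    have hM1 : 1 ≤ MfFun t := MfFun_one_le ht
    have hMpos : 0 < MfFun t := lt_of_lt_of_le one_pos hM1
    have hfM : 0 < f (MfFun t) := hfpos _ hMpos
    have hsymt : f t⁻¹ = f t / t := by
      rw [hsym t ht]; field_simp
    have hstep : ∀ u : ℝ, MfFun t < u → f t * (t + 1) / (2 * t) * (MfFun t) / f (MfFun t) ≤ u := by
      intro u hMu
      have hu : 0 < u := lt_trans hMpos hMu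
      have hL := hL2 t t⁻¹ u ht (inv_pos.mpr ht) (by exact hMu)
      have e1 : f t * (t + 1) / (2 * t) = (f t + f t⁻¹) / 2 := by
        rw [hsymt]; field_simp
      have hfu_ub : f u * MfFun t ≤ f (MfFun t) * u := ratio (MfFun t) u hMpos (le_of_lt hMu)
      rw [div_le_iff₀ hfM, e1]
      nlinarith [hL, hfu_ub, hMpos]
    have hkey : f t * (t + 1) / (2 * t) * (MfFun t) / f (MfFun t) ≤ MfFun t :=
      le_of_forall_gt_imp_ge_of_dense hstep
    rw [div_le_iff₀ hfM] at hkey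
    have h5 : f t * (t + 1) / (2 * t) ≤ f (MfFun t) := by nlinarith [hkey, hMpos]
    rw [div_le_iff₀ (by positivity : (0:ℝ) < 2 * t)] at h5
    linarith
  have Gstep : ∀ t : ℝ, 0 < t → f t / (t + 1) ≤ f (MfFun t) / (MfFun t + 1) := by
    intro t ht
    have hM1 : 1 ≤ MfFun t := MfFun_one_le ht
    have hMpos : 0 < MfFun t := lt_of_lt_of_le one_pos hM1
    have hident := MfFun_ident ht
    rw [div_le_div_iff₀ (by linarith) (by linarith)]
    have hstar := star t ht
    have h2 := mul_le_mul_of_nonneg_right hstar (show (0:ℝ) ≤ t + 1 by linarith)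
    have h3 : f t * (t + 1) * (t + 1) = 2 * t * (f t * (MfFun t + 1)) := by
      linear_combination f t * hident
    have h4 : f (MfFun t) * (2 * t) * (t + 1) = 2 * t * (f (MfFun t) * (t + 1)) := by ring
    rw [h3, h4] at h2
    exact le_of_mul_le_mul_left h2 (by positivity)
  have fle : ∀ t : ℝ, 1 ≤ t → f t ≤ t := by
    intro t ht
    have ht0 : 0 < t := lt_of_lt_of_le one_pos ht
    have h1 : f t⁻¹ ≤ f 1 := hmono _ _ (inv_pos.mpr ht0) (inv_le_one_of_one_le₀ ht)
    calc f t = t * f t⁻¹ := hsym t ht0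
      _ ≤ t * f 1 := mul_le_mul_of_nonneg_left h1 (le_of_lt ht0)
      _ = t := by rw [hone, mul_one]
  intro t ht
  set T : ℕ → ℝ := fun k => MfFun^[k] (MfFun t) with hT
  have hTsucc : ∀ k, T (k + 1) = MfFun (T k) := by
    intro k
    simp only [hT]
    rw [Function.iterate_succ_apply']
  have hfacts : ∀ k, 1 ≤ T k ∧ T k - 1 ≤ (T 0 - 1) / 2 ^ k ∧
      f t / (t + 1) ≤ f (T k) / (T k + 1) := by
    intro k
    induction k with
    | zero =>
      refine ⟨MfFun_one_le ht, by norm_num, Gstep t ht⟩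
    | succ k ih =>
      obtain ⟨ih1, ih2, ih3⟩ := ih
      have hTk : 0 < T k := lt_of_lt_of_le one_pos ih1
      refine ⟨?_, ?_, ?_⟩
      · rw [hTsucc]; exact MfFun_one_le hTk
      · rw [hTsucc]
        calc MfFun (T k) - 1 ≤ (T k - 1) / 2 := MfFun_half ih1
          _ ≤ ((T 0 - 1) / 2 ^ k) / 2 := by linarith
          _ = (T 0 - 1) / 2 ^ (k + 1) := by rw [div_div, pow_succ]
      · rw [hTsucc]
        exact le_trans ih3 (Gstep _ hTk)
  have hT0 : 1 ≤ T 0 := (hfacts 0).1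
  have hbound : ∀ k : ℕ, f t / (t + 1) ≤ 1 / 2 + (T 0 - 1) / 2 ^ k := by
    intro k
    obtain ⟨h1, h2, h3⟩ := hfacts k
    have hTk : 0 < T k := lt_of_lt_of_le one_pos h1
    have h4 : f (T k) / (T k + 1) ≤ T k / (T k + 1) :=
      (div_le_div_iff_of_pos_right (by linarith)).mpr (fle _ h1)
    have h5 : T k / (T k + 1) ≤ T k / 2 :=
      div_le_div_of_nonneg_left (le_of_lt hTk) two_pos (by linarith)
    have h6 : T k / 2 = 1 / 2 + (T k - 1) / 2 := by ring
    have h7 : (T k - 1) / 2 ≤ (T 0 - 1) / 2 ^ k := by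
      have h8 : 0 ≤ (T 0 - 1) / 2 ^ k := div_nonneg (by linarith) (by positivity)
      linarith
    linarith
  have final : f t / (t + 1) ≤ 1 / 2 := by
    refine le_of_forall_pos_le_add ?_
    intro ε hε
    obtain ⟨k, hk⟩ := pow_unbounded_of_one_lt (y := (2:ℝ)) ((T 0 - 1) / ε) one_lt_two
    have h2k : (0:ℝ) < 2 ^ k := by positivity
    have h9 : (T 0 - 1) / 2 ^ k < ε := by
      rw [div_lt_iff₀ h2k]
      rw [div_lt_iff₀ hε] at hk
      linarith
    exact le_trans (hbound k) (by linarith)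
  rw [div_le_iff₀ (by linarith : (0:ℝ) < t + 1)] at final
  linarith

lemma inv_antitone {n : ℕ} {A B : Matrix (Fin n) (Fin n) ℂ} (hA : A.PosDef) (hB : B.PosDef)
    (hAB : (B - A).PosSemidef) : (A⁻¹ - B⁻¹).PosSemidef := by
  have hAd : IsUnit A.det := (Matrix.isUnit_iff_isUnit_det A).mp hA.isUnit
  have hBd : IsUnit B.det := (Matrix.isUnit_iff_isUnit_det B).mp hB.isUnit
  have hA1 : A * A⁻¹ = 1 := Matrix.mul_nonsing_inv A hAd
  have hA2 : A⁻¹ * A = 1 := Matrix.nonsing_inv_mul A hAd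
  have hB1 : B * B⁻¹ = 1 := Matrix.mul_nonsing_inv B hBd
  have hB2 : B⁻¹ * B = 1 := Matrix.nonsing_inv_mul B hBd
  have r1 : (B - A) * A⁻¹ * (B - A) = (B * A⁻¹ - 1) * (B - A) := by
    rw [Matrix.sub_mul, hA1]
  have r3 : B * A⁻¹ * A = B := by rw [Matrix.mul_assoc, hA2, mul_one]
  have r2 : (B * A⁻¹ - 1) * (B - A) = B * A⁻¹ * B - B - B + A := by
    rw [Matrix.sub_mul, Matrix.mul_sub, one_mul, r3]
    abel
  have key' : B * (A⁻¹ - B⁻¹) * B = (B - A) + (B - A) * A⁻¹ * (B - A) := by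
    rw [r1, r2, Matrix.mul_sub, Matrix.sub_mul, hB1, one_mul]
    abel
  have key : A⁻¹ - B⁻¹ = B⁻¹ * ((B - A) + (B - A) * A⁻¹ * (B - A)) * B⁻¹ := by
    have h := congrArg (fun M => B⁻¹ * M * B⁻¹) key'
    rw [← h]
    rw [show B * (A⁻¹ - B⁻¹) * B = B * ((A⁻¹ - B⁻¹) * B) from Matrix.mul_assoc _ _ _]
    rw [← Matrix.mul_assoc B⁻¹ B _, hB2, one_mul, Matrix.mul_assoc, hB1, mul_one]
  have hX2 : ((B - A) * A⁻¹ * (B - A)).PosSemidef := by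
    have h := (hA.inv.posSemidef).conjTranspose_mul_mul_same (B := B - A)
    rwa [hAB.1.eq] at h
  have hsum : ((B - A) + (B - A) * A⁻¹ * (B - A)).PosSemidef := hAB.add hX2
  have hfinal := hsum.conjTranspose_mul_mul_same (B := B⁻¹)
  rwa [hB.1.inv.eq, ← key] at hfinal

lemma herFun_posDef {n : ℕ} (f : ℝ → ℝ) (hfpos : ∀ t : ℝ, 0 < t → 0 < f t)
    {A : Matrix (Fin n) (Fin n) ℂ} (hA : A.PosDef) : (herFun f hA.1).PosDef := by
  have hU := (hA.1.eigenvectorUnitary).2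
  rw [herFun_conj f hU hA.1.eigenvalues hA.1 hA.1.spectral_theorem]
  exact posDef_conj hU (Matrix.PosDef.diagonal fun i =>
    Complex.zero_lt_real.mpr (hfpos _ (hA.eigenvalues_pos i)))

lemma herFun_inv_eq {n : ℕ} (f : ℝ → ℝ) (hfpos : ∀ t : ℝ, 0 < t → 0 < f t)
    {A : Matrix (Fin n) (Fin n) ℂ} (hA : A.PosDef) :
    herFun (fun t => (f t⁻¹)⁻¹) hA.1 = (herFun f hA.inv.1)⁻¹ := by
  have hU := (hA.1.eigenvectorUnitary).2
  have hμpos : ∀ i, 0 < hA.1.eigenvalues i := hA.eigenvalues_pos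
  have hAinv_eq : A⁻¹ = (hA.1.eigenvectorUnitary : Matrix (Fin n) (Fin n) ℂ) *
      Matrix.diagonal (Complex.ofReal ∘ fun i => (hA.1.eigenvalues i)⁻¹) *
      star (hA.1.eigenvectorUnitary : Matrix (Fin n) (Fin n) ℂ) := by
    conv_lhs => rw [hA.1.spectral_theorem, Unitary.conjStarAlgAut_apply]
    rw [inv_conj hU _ (fun i => by
      simpa using Complex.ofReal_ne_zero.mpr (ne_of_gt (hμpos i)))]
    have hfe : (fun i => ((RCLike.ofReal (K := ℂ) ∘ hA.1.eigenvalues) i)⁻¹) =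
        (Complex.ofReal ∘ fun i => (hA.1.eigenvalues i)⁻¹) := by
      funext i
      simp only [Function.comp_apply]
      norm_cast
    rw [hfe]
  have h1 : herFun f hA.inv.1 = (hA.1.eigenvectorUnitary : Matrix (Fin n) (Fin n) ℂ) *
      Matrix.diagonal (Complex.ofReal ∘ f ∘ fun i => (hA.1.eigenvalues i)⁻¹) *
      star (hA.1.eigenvectorUnitary : Matrix (Fin n) (Fin n) ℂ) :=
    herFun_conj f hU _ hA.inv.1 hAinv_eq
  have h2 := inv_conj hU (Complex.ofReal ∘ f ∘ fun i => (hA.1.eigenvalues i)⁻¹) (fun i => by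
    simpa using Complex.ofReal_ne_zero.mpr (ne_of_gt (hfpos _ (inv_pos.mpr (hμpos i)))))
  have h3 : herFun (fun t => (f t⁻¹)⁻¹) hA.1 =
      (hA.1.eigenvectorUnitary : Matrix (Fin n) (Fin n) ℂ) *
      Matrix.diagonal (Complex.ofReal ∘ (fun t => (f t⁻¹)⁻¹) ∘ hA.1.eigenvalues) *
      star (hA.1.eigenvectorUnitary : Matrix (Fin n) (Fin n) ℂ) :=
    herFun_conj _ hU _ hA.1 hA.1.spectral_theorem
  rw [h1, h2, h3]
  have hfe2 : (Complex.ofReal ∘ (fun t => (f t⁻¹)⁻¹) ∘ hA.1.eigenvalues) =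
      (fun i => ((Complex.ofReal ∘ f ∘ fun i => (hA.1.eigenvalues i)⁻¹) i)⁻¹) := by
    funext i
    simp [Complex.ofReal_inv]
  rw [hfe2]

lemma opmono_inv {f : ℝ → ℝ} (hfpos : ∀ t : ℝ, 0 < t → 0 < f t)
    (hmono : OperatorMonotone f) : OperatorMonotone (fun t => (f t⁻¹)⁻¹) := by
  intro n A B hA hB hAB
  have hinv : (A⁻¹ - B⁻¹).PosSemidef := inv_antitone hA hB hAB
  have h2 := hmono n B⁻¹ A⁻¹ hB.inv hA.inv hinv
  have hfa : (herFun f hA.inv.1).PosDef := herFun_posDef f hfpos hA.inv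
  have hfb : (herFun f hB.inv.1).PosDef := herFun_posDef f hfpos hB.inv
  rw [herFun_inv_eq f hfpos hA, herFun_inv_eq f hfpos hB]
  exact inv_antitone hfb hfa h2

/-- Every `f ∈ F_op` satisfies `2t/(t+1) ≤ f(t) ≤ (t+1)/2` for `t > 0`. -/
theorem fop_pointwise_bounds (f : ℝ → ℝ) (hfpos : ∀ t : ℝ, 0 < t → 0 < f t)
    (hmono : OperatorMonotone f) (hsym : ∀ t : ℝ, 0 < t → f t = t * f t⁻¹)
    (hone : f 1 = 1) :
    ∀ t : ℝ, 0 < t → 2 * t / (t + 1) ≤ f t ∧ f t ≤ (t + 1) / 2 := by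
  have upper := scalar_upper hfpos
    (fun a b ha hab => opmono_scalar_mono hmono ha hab)
    (fun s r u hs hr hu => opmono_L2 hmono hs hr hu) hsym hone
  set g : ℝ → ℝ := fun t => (f t⁻¹)⁻¹ with hg
  have hgpos : ∀ t : ℝ, 0 < t → 0 < g t := fun t ht =>
    inv_pos.mpr (hfpos _ (inv_pos.mpr ht))
  have hgmono : OperatorMonotone g := opmono_inv hfpos hmono
  have hfinv : ∀ t : ℝ, 0 < t → f t⁻¹ = f t / t := by
    intro t ht
    rw [hsym t ht]
    field_simp
  have hgsym : ∀ t : ℝ, 0 < t → g t = t * g t⁻¹ := by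
    intro t ht
    have hft : 0 < f t := hfpos t ht
    simp only [hg, inv_inv]
    rw [hfinv t ht, inv_div, div_eq_mul_inv]
  have hgone : g 1 = 1 := by simp [hg, hone]
  have gupper := scalar_upper hgpos
    (fun a b ha hab => opmono_scalar_mono hgmono ha hab)
    (fun s r u hs hr hu => opmono_L2 hgmono hs hr hu) hgsym hgone
  intro t ht
  have hft : 0 < f t := hfpos t ht
  refine ⟨?_, upper t ht⟩
  have h := gupper t ht
  have h2 : g t = t / f t := by
    simp only [hg]
    rw [hfinv t ht, inv_div]
  rw [h2, div_le_div_iff₀ hft (by norm_num : (0:ℝ) < 2)] at h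
  rw [div_le_iff₀ (by linarith : (0:ℝ) < t + 1)]
  linarith
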